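/- Let Ω ⊆ ℝ^N be open and connected and let S be a nonnegative selfadjoint operator on L²(Ω) whose semigroup e^{-tS} is positivity preserving (f ≥ 0 implies e^{-tS}f ≥ 0 a.e.). Let α > 0 and suppose there exists a nonzero nonnegative g₀ ∈ R(S^α). If g ∈ L²(Ω) satisfies |g| ≤ C e^{-t₀S} g₀ a.e. for some constants C, t₀ > 0, then g ∈ R(S^α). -/

import Mathlib

/-!
`S` is a nonnegative selfadjoint operator on `L²(Ω)` with trivial kernel whose
semigroup `T t = e^{-tS}` is positivity preserving.  The semigroup is given as data
`T` together with its characteristic properties as hypotheses, and membership in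
`R(S^α)` is characterized by the finiteness of `∫₀^∞ t^{2α-1}‖e^{-tS}g‖²_{L²} dt`.
-/

open MeasureTheory Filter
open scoped ENNReal NNReal Topology

set_option maxHeartbeats 1000000 in
/-- Let `Ω ⊆ ℝ^N` be open and connected, `S` nonnegative selfadjoint
on `L²(Ω)` with positivity-preserving semigroup `e^{-tS}`, `α > 0`, and suppose there
is a nonzero nonnegative `g₀ ∈ R(S^α)`.  If `g ∈ L²(Ω)` satisfies
`|g| ≤ C e^{-t₀S} g₀` a.e. for some `C, t₀ > 0`, then `g ∈ R(S^α)`. -/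
theorem stmt14 {N : ℕ} (Ω : Set (EuclideanSpace ℝ (Fin N)))
    (hΩopen : IsOpen Ω) (hΩconn : IsConnected Ω)
    (μ : Measure (EuclideanSpace ℝ (Fin N))) (hμ : μ = volume.restrict Ω)
    -- the semigroup `T t = e^{-tS}` of `S` and its characteristic properties:
    (T : ℝ → (EuclideanSpace ℝ (Fin N) → ℂ) → (EuclideanSpace ℝ (Fin N) → ℂ))
    (hT0 : ∀ f, T 0 f = f)
    (hTlin : ∀ t, IsLinearMap ℂ (T t))
    (hTae : ∀ t f₁ f₂, f₁ =ᵐ[μ] f₂ → T t f₁ =ᵐ[μ] T t f₂)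
    (hTsemi : ∀ s t, 0 ≤ s → 0 ≤ t → ∀ f, T (s + t) f =ᵐ[μ] T s (T t f))
    (hTcontr : ∀ t, 0 ≤ t → ∀ f, eLpNorm (T t f) 2 μ ≤ eLpNorm f 2 μ)
    (hTsa : ∀ t, 0 ≤ t → ∀ f h, MemLp f 2 μ → MemLp h 2 μ →
      ∫ x, (starRingEnd ℂ) (T t f x) * h x ∂μ = ∫ x, (starRingEnd ℂ) (f x) * T t h x ∂μ)
    -- positivity preserving: `f ≥ 0` a.e. implies `e^{-tS} f ≥ 0` a.e.
    (hTpos : ∀ t, 0 ≤ t → ∀ f, (∀ᵐ x ∂μ, 0 ≤ (f x).re ∧ (f x).im = 0) →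
      (∀ᵐ x ∂μ, 0 ≤ (T t f x).re ∧ (T t f x).im = 0))
    (α : ℝ) (hα : 0 < α)
    -- a nonzero nonnegative `g₀ ∈ R(S^α)`:
    (g₀ : EuclideanSpace ℝ (Fin N) → ℂ) (hg₀L2 : MemLp g₀ 2 μ)
    (hg₀pos : ∀ᵐ x ∂μ, 0 ≤ (g₀ x).re ∧ (g₀ x).im = 0)
    (hg₀ne : ¬ g₀ =ᵐ[μ] 0)
    (hg₀R : (∫⁻ t in Set.Ioi (0 : ℝ),
      ENNReal.ofReal (t ^ (2 * α - 1)) * (eLpNorm (T t g₀) 2 μ) ^ 2) < ⊤)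
    -- the function `g`:
    (g : EuclideanSpace ℝ (Fin N) → ℂ) (hg : MemLp g 2 μ)
    (C t₀ : ℝ) (hC : 0 < C) (ht₀ : 0 < t₀)
    (hdom : ∀ᵐ x ∂μ, ‖g x‖ ≤ C * (T t₀ g₀ x).re) :
    (∫⁻ t in Set.Ioi (0 : ℝ),
      ENNReal.ofReal (t ^ (2 * α - 1)) * (eLpNorm (T t g) 2 μ) ^ 2) < ⊤ := by
  classical
  set β : ℝ := 2 * α - 1 with hβdef
  have hβ : -1 < β := by simp only [hβdef]; linarith
  set h : EuclideanSpace ℝ (Fin N) → ℂ := T t₀ g₀ with hhdef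
  -- key a.e. domination lemma for real-valued parts
  have hTh := hTpos t₀ ht₀.le g₀ hg₀pos
  have key : ∀ t : ℝ, 0 ≤ t →
      eLpNorm (T t g) 2 μ ≤ ENNReal.ofReal (4 * C) * eLpNorm (T (t + t₀) g₀) 2 μ := by
    intro t ht
    have part : ∀ w : EuclideanSpace ℝ (Fin N) → ℂ, (∀ x, 0 ≤ (w x).re ∧ (w x).im = 0) →
        (∀ᵐ x ∂μ, (w x).re ≤ C * (h x).re) →
        (∀ᵐ x ∂μ, 0 ≤ (T t w x).re ∧ (T t w x).im = 0 ∧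
          (T t w x).re ≤ C * (T t h x).re) := by
      intro w hw hwle
      have h1 := hTpos t ht w (Filter.Eventually.of_forall hw)
      have h2 : ∀ᵐ x ∂μ, 0 ≤ (((C:ℂ) • h - w) x).re ∧ (((C:ℂ) • h - w) x).im = 0 := by
        filter_upwards [hTh, hwle] with x hx hxle
        have him : (h x).im = 0 := hx.2
        constructor
        · simp only [Pi.sub_apply, Pi.smul_apply, smul_eq_mul, Complex.sub_re,
            Complex.mul_re, Complex.ofReal_re, Complex.ofReal_im, him]
          simp only [zero_mul, mul_zero, sub_zero]
          linarith
        · simp only [Pi.sub_apply, Pi.smul_apply, smul_eq_mul, Complex.sub_im,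
            Complex.mul_im, Complex.ofReal_re, Complex.ofReal_im, him, (hw x).2]
          ring
      have h3 := hTpos t ht _ h2
      have hlin : T t ((C:ℂ) • h - w) = (C:ℂ) • T t h - T t w := by
        rw [(hTlin t).map_sub, (hTlin t).map_smul]
      rw [hlin] at h3
      filter_upwards [h1, h3] with x hx1 hx3
      refine ⟨hx1.1, hx1.2, ?_⟩
      have := hx3.1
      simp only [Pi.sub_apply, Pi.smul_apply, smul_eq_mul, Complex.sub_re,
        Complex.mul_re, Complex.ofReal_re, Complex.ofReal_im, zero_mul, sub_zero] at this
      linarith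
    -- the four pieces of g
    set u1 : EuclideanSpace ℝ (Fin N) → ℂ := fun x => ((max (g x).re 0 : ℝ) : ℂ) with hu1
    set u2 : EuclideanSpace ℝ (Fin N) → ℂ := fun x => ((max (-(g x).re) 0 : ℝ) : ℂ) with hu2
    set u3 : EuclideanSpace ℝ (Fin N) → ℂ := fun x => ((max (g x).im 0 : ℝ) : ℂ) with hu3
    set u4 : EuclideanSpace ℝ (Fin N) → ℂ := fun x => ((max (-(g x).im) 0 : ℝ) : ℂ) with hu4
    have habs_re : ∀ x : EuclideanSpace ℝ (Fin N), |(g x).re| ≤ ‖g x‖ := fun x =>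
      Complex.abs_re_le_norm (g x)
    have habs_im : ∀ x : EuclideanSpace ℝ (Fin N), |(g x).im| ≤ ‖g x‖ := fun x =>
      Complex.abs_im_le_norm (g x)
    have hle : ∀ w ∈ [u1, u2, u3, u4], ∀ᵐ x ∂μ, (w x).re ≤ C * (h x).re := by
      intro w hw
      filter_upwards [hdom] with x hx
      fin_cases hw <;>
        · simp only [hu1, hu2, hu3, hu4, Complex.ofReal_re]
          refine le_trans ?_ hx
          rw [max_le_iff]
          constructor
          · first
              | exact le_trans (le_abs_self _) (habs_re x)
              | exact le_trans (neg_le_abs _) (habs_re x)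
              | exact le_trans (le_abs_self _) (habs_im x)
              | exact le_trans (neg_le_abs _) (habs_im x)
          · exact norm_nonneg _
    have hnn : ∀ w ∈ [u1, u2, u3, u4], ∀ x, 0 ≤ (w x).re ∧ (w x).im = 0 := by
      intro w hw x
      fin_cases hw <;> simp [hu1, hu2, hu3, hu4, le_max_right]
    have p1 := part u1 (hnn u1 (by simp)) (hle u1 (by simp))
    have p2 := part u2 (hnn u2 (by simp)) (hle u2 (by simp))
    have p3 := part u3 (hnn u3 (by simp)) (hle u3 (by simp))
    have p4 := part u4 (hnn u4 (by simp)) (hle u4 (by simp))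
    have hgdecomp : g = (u1 - u2) + Complex.I • (u3 - u4) := by
      funext y
      have hre : max (g y).re 0 - max (-(g y).re) 0 = (g y).re :=
        max_zero_sub_max_neg_zero_eq_self _
      have him : max (g y).im 0 - max (-(g y).im) 0 = (g y).im :=
        max_zero_sub_max_neg_zero_eq_self _
      simp only [Pi.add_apply, Pi.sub_apply, Pi.smul_apply, smul_eq_mul, hu1, hu2, hu3, hu4]
      apply Complex.ext <;>
        simp [Complex.add_re, Complex.add_im, Complex.mul_re, Complex.mul_im, hre, him]
    have hTg : T t g = (T t u1 - T t u2) + Complex.I • (T t u3 - T t u4) := by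
      rw [hgdecomp, (hTlin t).map_add, (hTlin t).map_smul, (hTlin t).map_sub,
        (hTlin t).map_sub]
    have hrealnorm : ∀ z : ℂ, 0 ≤ z.re → z.im = 0 → ‖z‖ = z.re := by
      intro z hz1 hz2
      have : z = ((z.re : ℝ) : ℂ) := Complex.ext (by simp) (by simp [hz2])
      rw [this, Complex.norm_real, Real.norm_eq_abs, abs_of_nonneg (by simpa using hz1)]
      simp
    have hnorm : ∀ᵐ x ∂μ, ‖T t g x‖ ≤ ‖(((4 * C : ℝ) : ℂ) • T t h) x‖ := by
      filter_upwards [p1, p2, p3, p4] with x h1 h2 h3 h4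
      have hre_le : (T t h x).re ≤ ‖T t h x‖ :=
        Complex.re_le_norm _
      have e1 : ‖T t u1 x‖ ≤ C * ‖T t h x‖ := by
        rw [hrealnorm _ h1.1 h1.2.1]; exact le_trans h1.2.2 (by nlinarith)
      have e2 : ‖T t u2 x‖ ≤ C * ‖T t h x‖ := by
        rw [hrealnorm _ h2.1 h2.2.1]; exact le_trans h2.2.2 (by nlinarith)
      have e3 : ‖T t u3 x‖ ≤ C * ‖T t h x‖ := by
        rw [hrealnorm _ h3.1 h3.2.1]; exact le_trans h3.2.2 (by nlinarith)
      have e4 : ‖T t u4 x‖ ≤ C * ‖T t h x‖ := by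
        rw [hrealnorm _ h4.1 h4.2.1]; exact le_trans h4.2.2 (by nlinarith)
      have htri : ‖T t g x‖ ≤ ‖T t u1 x‖ + ‖T t u2 x‖ + (‖T t u3 x‖ + ‖T t u4 x‖) := by
        rw [hTg]
        simp only [Pi.add_apply, Pi.sub_apply, Pi.smul_apply, smul_eq_mul]
        calc ‖T t u1 x - T t u2 x + Complex.I * (T t u3 x - T t u4 x)‖
            ≤ ‖T t u1 x - T t u2 x‖ + ‖Complex.I * (T t u3 x - T t u4 x)‖ := norm_add_le _ _
          _ ≤ ‖T t u1 x‖ + ‖T t u2 x‖ + (‖T t u3 x‖ + ‖T t u4 x‖) := by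
              rw [norm_mul, Complex.norm_I, one_mul]
              exact add_le_add (norm_sub_le _ _) (norm_sub_le _ _)
      have hsm : ‖(((4 * C : ℝ) : ℂ) • T t h) x‖ = (4 * C) * ‖T t h x‖ := by
        simp only [Pi.smul_apply, norm_smul, Complex.norm_real, Real.norm_eq_abs]
        rw [abs_of_nonneg (by linarith)]
      rw [hsm]
      linarith
    calc eLpNorm (T t g) 2 μ ≤ eLpNorm (((4 * C : ℝ) : ℂ) • T t h) 2 μ :=
          eLpNorm_mono_ae hnorm
      _ = (‖((4 * C : ℝ) : ℂ)‖₊ : ℝ≥0∞) * eLpNorm (T t h) 2 μ := eLpNorm_const_smul _ _ _ _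
      _ = ENNReal.ofReal (4 * C) * eLpNorm (T (t + t₀) g₀) 2 μ := by
          rw [eLpNorm_congr_ae (hTsemi t t₀ ht ht₀.le g₀).symm]
          congr 1
          rw [← enorm_eq_nnnorm, ← ofReal_norm_eq_enorm, Complex.norm_real, Real.norm_eq_abs,
            abs_of_nonneg (by linarith)]
  -- split the integral
  have hsplit : Set.Ioi (0:ℝ) = Set.Ioc 0 1 ∪ Set.Ioi 1 :=
    (Set.Ioc_union_Ioi_eq_Ioi zero_le_one).symm
  rw [hsplit, lintegral_union measurableSet_Ioi Set.Ioc_disjoint_Ioi_same]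
  have hGfin : eLpNorm g 2 μ < ⊤ := hg.2
  -- first piece
  have I1 : (∫⁻ t in Set.Ioc (0:ℝ) 1,
      ENNReal.ofReal (t ^ β) * (eLpNorm (T t g) 2 μ) ^ 2) < ⊤ := by
    have hmono : ∀ᵐ t ∂(volume.restrict (Set.Ioc (0:ℝ) 1)),
        ENNReal.ofReal (t ^ β) * (eLpNorm (T t g) 2 μ) ^ 2 ≤
        ENNReal.ofReal (t ^ β) * (eLpNorm g 2 μ) ^ 2 := by
      refine (ae_restrict_iff' measurableSet_Ioc).2 (Filter.Eventually.of_forall ?_)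
      intro t ht
      exact mul_le_mul_right (pow_le_pow_left' (hTcontr t ht.1.le g) 2) _
    have hJ : (∫⁻ t in Set.Ioc (0:ℝ) 1, ENNReal.ofReal (t ^ β)) < ⊤ := by
      have hi : IntervalIntegrable (fun t : ℝ => t ^ β) volume 0 1 :=
        intervalIntegral.intervalIntegrable_rpow' hβ
      have := ((intervalIntegrable_iff_integrableOn_Ioc_of_le zero_le_one).1 hi)
      exact this.lintegral_lt_top
    calc (∫⁻ t in Set.Ioc (0:ℝ) 1, ENNReal.ofReal (t ^ β) * (eLpNorm (T t g) 2 μ) ^ 2)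
        ≤ ∫⁻ t in Set.Ioc (0:ℝ) 1, ENNReal.ofReal (t ^ β) * (eLpNorm g 2 μ) ^ 2 :=
          lintegral_mono_ae hmono
      _ = (∫⁻ t in Set.Ioc (0:ℝ) 1, ENNReal.ofReal (t ^ β)) * (eLpNorm g 2 μ) ^ 2 :=
          lintegral_mul_const' _ _ (ENNReal.pow_ne_top hGfin.ne)
      _ < ⊤ := ENNReal.mul_lt_top hJ (ENNReal.pow_lt_top hGfin)
  -- second piece
  have I2 : (∫⁻ t in Set.Ioi (1:ℝ),
      ENNReal.ofReal (t ^ β) * (eLpNorm (T t g) 2 μ) ^ 2) < ⊤ := by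
    set K₁ : ℝ := max 1 ((1 + t₀) ^ (-β)) with hK₁
    have hK₁pos : 0 < K₁ := lt_of_lt_of_le one_pos (le_max_left _ _)
    have hrpow : ∀ t : ℝ, 1 < t → t ^ β ≤ K₁ * (t + t₀) ^ β := by
      intro t ht
      have ht0 : (0:ℝ) < t := lt_trans one_pos ht
      have htt0 : (0:ℝ) < t + t₀ := by linarith
      rcases le_or_gt 0 β with hb | hb
      · have : t ^ β ≤ (t + t₀) ^ β :=
          Real.rpow_le_rpow ht0.le (by linarith) hb
        calc t ^ β ≤ (t + t₀) ^ β := this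
          _ ≤ K₁ * (t + t₀) ^ β := by
            exact le_mul_of_one_le_left (Real.rpow_nonneg htt0.le β) (le_max_left _ _)
      · have hmul : t + t₀ ≤ t * (1 + t₀) := by nlinarith
        have h1 : (t * (1 + t₀)) ^ β ≤ (t + t₀) ^ β :=
          Real.rpow_le_rpow_of_nonpos htt0 hmul hb.le
        have h2 : (t * (1 + t₀)) ^ β = t ^ β * (1 + t₀) ^ β :=
          Real.mul_rpow ht0.le (by linarith)
        have h3 : (0:ℝ) < (1 + t₀) ^ β := Real.rpow_pos_of_pos (by linarith) _
        have h4 : (1 + t₀) ^ (-β) * (1 + t₀) ^ β = 1 := by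
          rw [← Real.rpow_add (by linarith)]; simp
        have h5 : t ^ β ≤ (t + t₀) ^ β * (1 + t₀) ^ (-β) := by
          rw [h2] at h1
          have := mul_le_mul_of_nonneg_right h1 (le_of_lt (Real.rpow_pos_of_pos
            (show (0:ℝ) < 1 + t₀ by linarith) (-β)))
          calc t ^ β = t ^ β * ((1 + t₀) ^ β * (1 + t₀) ^ (-β)) := by
                rw [mul_comm ((1 + t₀) ^ β) _, h4, mul_one]
            _ = t ^ β * (1 + t₀) ^ β * (1 + t₀) ^ (-β) := by ring
            _ ≤ (t + t₀) ^ β * (1 + t₀) ^ (-β) := this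
        calc t ^ β ≤ (t + t₀) ^ β * (1 + t₀) ^ (-β) := h5
          _ ≤ K₁ * (t + t₀) ^ β := by
            rw [mul_comm]
            exact mul_le_mul_of_nonneg_right (le_max_right _ _)
              (Real.rpow_nonneg htt0.le β)
    set K : ℝ≥0∞ := ENNReal.ofReal K₁ * (ENNReal.ofReal (4 * C)) ^ 2 with hK
    have hKfin : K ≠ ⊤ :=
      ENNReal.mul_ne_top ENNReal.ofReal_ne_top (ENNReal.pow_ne_top ENNReal.ofReal_ne_top)
    have hmono : ∀ᵐ t ∂(volume.restrict (Set.Ioi (1:ℝ))),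
        ENNReal.ofReal (t ^ β) * (eLpNorm (T t g) 2 μ) ^ 2 ≤
        K * (ENNReal.ofReal ((t + t₀) ^ β) * (eLpNorm (T (t + t₀) g₀) 2 μ) ^ 2) := by
      refine (ae_restrict_iff' measurableSet_Ioi).2 (Filter.Eventually.of_forall ?_)
      intro t ht
      have ht1 : (1:ℝ) < t := ht
      have e1 : ENNReal.ofReal (t ^ β) ≤
          ENNReal.ofReal K₁ * ENNReal.ofReal ((t + t₀) ^ β) := by
        rw [← ENNReal.ofReal_mul hK₁pos.le]
        exact ENNReal.ofReal_le_ofReal (hrpow t ht1)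
      have e2 : (eLpNorm (T t g) 2 μ) ^ 2 ≤
          (ENNReal.ofReal (4 * C)) ^ 2 * (eLpNorm (T (t + t₀) g₀) 2 μ) ^ 2 := by
        rw [← mul_pow]
        exact pow_le_pow_left' (key t (by linarith)) 2
      calc ENNReal.ofReal (t ^ β) * (eLpNorm (T t g) 2 μ) ^ 2
          ≤ (ENNReal.ofReal K₁ * ENNReal.ofReal ((t + t₀) ^ β)) *
            ((ENNReal.ofReal (4 * C)) ^ 2 * (eLpNorm (T (t + t₀) g₀) 2 μ) ^ 2) :=
            mul_le_mul' e1 e2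
        _ = K * (ENNReal.ofReal ((t + t₀) ^ β) * (eLpNorm (T (t + t₀) g₀) 2 μ) ^ 2) := by
            rw [hK]; ring
    have hsub : (∫⁻ t in Set.Ioi (1:ℝ),
        ENNReal.ofReal ((t + t₀) ^ β) * (eLpNorm (T (t + t₀) g₀) 2 μ) ^ 2) =
        ∫⁻ s in Set.Ioi (1 + t₀),
        ENNReal.ofReal (s ^ β) * (eLpNorm (T s g₀) 2 μ) ^ 2 := by
      have hemb : MeasurableEmbedding (fun t : ℝ => t + t₀) :=
        (MeasurableEquiv.addRight t₀).measurableEmbedding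
      have hpre : (fun t : ℝ => t + t₀) ⁻¹' Set.Ioi (1 + t₀) = Set.Ioi 1 := by
        ext x; simp [Set.mem_Ioi]
      conv_rhs => rw [← map_add_right_eq_self volume t₀]
      rw [Measure.restrict_map hemb.measurable measurableSet_Ioi,
        hemb.lintegral_map, hpre]
    calc (∫⁻ t in Set.Ioi (1:ℝ), ENNReal.ofReal (t ^ β) * (eLpNorm (T t g) 2 μ) ^ 2)
        ≤ ∫⁻ t in Set.Ioi (1:ℝ),
            K * (ENNReal.ofReal ((t + t₀) ^ β) * (eLpNorm (T (t + t₀) g₀) 2 μ) ^ 2) :=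
          lintegral_mono_ae hmono
      _ = K * ∫⁻ t in Set.Ioi (1:ℝ),
            ENNReal.ofReal ((t + t₀) ^ β) * (eLpNorm (T (t + t₀) g₀) 2 μ) ^ 2 :=
          lintegral_const_mul' _ _ hKfin
      _ = K * ∫⁻ s in Set.Ioi (1 + t₀),
            ENNReal.ofReal (s ^ β) * (eLpNorm (T s g₀) 2 μ) ^ 2 := by rw [hsub]
      _ ≤ K * ∫⁻ s in Set.Ioi (0:ℝ),
            ENNReal.ofReal (s ^ β) * (eLpNorm (T s g₀) 2 μ) ^ 2 := by
          refine mul_le_mul_right (lintegral_mono' (Measure.restrict_mono ?_ le_rfl) le_rfl) _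
          exact Set.Ioi_subset_Ioi (by linarith)
      _ < ⊤ := ENNReal.mul_lt_top hKfin.lt_top hg₀R
  exact ENNReal.add_lt_top.2 ⟨I1, I2⟩
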